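/- (Theorem 1, Born-approximation inversion formula) Let k > 0, let D ⊂ ℝ³ be a bounded open set, let p, q₀ : ℝ³ → ℂ be continuous with support in D, let α, β, ℰ ∈ ℝ³ with |α| = |β| = |ℰ| = 1 and β × ℰ ≠ 0, and set sin²θ := 1 − (β·ℰ)². Define A := (1/4π) ∫_D e^{−ikβ·y} p(y) ℰ e^{ikα·y} dy + (ik/4π) ( ∫_D e^{−ikβ·y} q₀(y) e^{ikα·y} dy ) β. Then 4π·((β × A)·(β × ℰ)) / sin²θ = ∫_D e^{ik(α−β)·y} p(y) dy. -/

import Mathlib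

/- STATEMENT 15 (Theorem 1, Born-approximation inversion formula): with
A := (1/4π) ∫_D e^{−ikβ·y} p(y) ℰ e^{ikα·y} dy
   + (ik/4π)(∫_D e^{−ikβ·y} q₀(y) e^{ikα·y} dy) β,
and sin²θ := 1 − (β·ℰ)², one has
4π ((β × A)·(β × ℰ)) / sin²θ = ∫_D e^{ik(α−β)·y} p(y) dy. -/

noncomputable section

open Real Complex MeasureTheory

abbrev R3 : Type := EuclideanSpace ℝ (Fin 3)

/-- Complex cross product, by the usual coordinate formula. -/
def crossc (u v : Fin 3 → ℂ) : Fin 3 → ℂ :=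
  ![u 1 * v 2 - u 2 * v 1, u 2 * v 0 - u 0 * v 2, u 0 * v 1 - u 1 * v 0]

/-- Bilinear dot product of complex vectors (no conjugation). -/
def dotc (u v : Fin 3 → ℂ) : ℂ := ∑ i, u i * v i

lemma sum_sq_of_norm_one (v : R3) (hv : ‖v‖ = 1) :
    v 0 ^ 2 + v 1 ^ 2 + v 2 ^ 2 = 1 := by
  have h := EuclideanSpace.norm_eq v
  rw [hv] at h
  have h2 : ∑ i, ‖v i‖ ^ 2 = 1 := Real.sqrt_eq_one.mp h.symm
  simpa [Fin.sum_univ_three, Real.norm_eq_abs, _root_.sq_abs] using h2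

theorem born_inversion_formula
    (k : ℝ) (hk : 0 < k) (D : Set R3) (hD : IsOpen D) (hDb : Bornology.IsBounded D)
    (p q₀ : R3 → ℂ) (hp : Continuous p) (hq : Continuous q₀)
    (hps : Function.support p ⊆ D) (hqs : Function.support q₀ ⊆ D)
    (α β ℰ : R3) (hα : ‖α‖ = 1) (hβ : ‖β‖ = 1) (hℰ : ‖ℰ‖ = 1)
    (hβℰ : crossc (fun i => (β i : ℂ)) (fun i => (ℰ i : ℂ)) ≠ 0)
    (A : Fin 3 → ℂ)
    (hA : A = fun i =>
      (1 / (4 * (Real.pi : ℂ))) *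
        ∫ y in D, Complex.exp (-(Complex.I * (k : ℂ)) * ((∑ j, β j * y j : ℝ) : ℂ))
          * (p y * ((ℰ i : ℂ) *
              Complex.exp (Complex.I * (k : ℂ) * ((∑ j, α j * y j : ℝ) : ℂ))))
      + Complex.I * (k : ℂ) / (4 * (Real.pi : ℂ)) *
          (∫ y in D, Complex.exp (-(Complex.I * (k : ℂ)) * ((∑ j, β j * y j : ℝ) : ℂ))
            * (q₀ y *
              Complex.exp (Complex.I * (k : ℂ) * ((∑ j, α j * y j : ℝ) : ℂ))))
          * (β i : ℂ)) :
    4 * (Real.pi : ℂ) *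
        dotc (crossc (fun i => (β i : ℂ)) A) (crossc (fun i => (β i : ℂ)) (fun i => (ℰ i : ℂ)))
        / ((1 - (∑ i, β i * ℰ i) ^ 2 : ℝ) : ℂ)
      = ∫ y in D,
          Complex.exp (Complex.I * (k : ℂ) * ((∑ j, (α j - β j) * y j : ℝ) : ℂ)) * p y := by
  set Ip : ℂ := ∫ y in D, Complex.exp (-(Complex.I * (k : ℂ)) * ((∑ j, β j * y j : ℝ) : ℂ))
      * (p y * Complex.exp (Complex.I * (k : ℂ) * ((∑ j, α j * y j : ℝ) : ℂ))) with hIp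
  set Iq : ℂ := ∫ y in D, Complex.exp (-(Complex.I * (k : ℂ)) * ((∑ j, β j * y j : ℝ) : ℂ))
      * (q₀ y * Complex.exp (Complex.I * (k : ℂ) * ((∑ j, α j * y j : ℝ) : ℂ))) with hIq
  set a : ℂ := (1 / (4 * (Real.pi : ℂ))) * Ip with ha
  set b : ℂ := Complex.I * (k : ℂ) / (4 * (Real.pi : ℂ)) * Iq with hb
  have hDfin : volume D < ⊤ :=
    lt_of_le_of_lt (measure_mono subset_closure) hDb.isCompact_closure.measure_lt_top
  set b2 : ℂ := (1 / (4 * (Real.pi : ℂ))) * (((volume D).toReal : ℝ) : ℂ) * b with hb2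
  have hA' : ∀ i, A i = a * (ℰ i : ℂ) + b2 * (β i : ℂ) := by
    intro i
    simp only [hA]
    have hcont : Continuous fun y : R3 =>
        Complex.exp (-(Complex.I * (k : ℂ)) * ((∑ j, β j * y j : ℝ) : ℂ))
          * (p y * ((ℰ i : ℂ) *
              Complex.exp (Complex.I * (k : ℂ) * ((∑ j, α j * y j : ℝ) : ℂ)))) := by
      fun_prop
    have hsupp : (Function.support fun y : R3 =>
        Complex.exp (-(Complex.I * (k : ℂ)) * ((∑ j, β j * y j : ℝ) : ℂ))
          * (p y * ((ℰ i : ℂ) *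
              Complex.exp (Complex.I * (k : ℂ) * ((∑ j, α j * y j : ℝ) : ℂ))))) ⊆ D := by
      intro y hy
      exact hps fun h0 => hy (by simp [h0])
    have hcs : HasCompactSupport fun y : R3 =>
        Complex.exp (-(Complex.I * (k : ℂ)) * ((∑ j, β j * y j : ℝ) : ℂ))
          * (p y * ((ℰ i : ℂ) *
              Complex.exp (Complex.I * (k : ℂ) * ((∑ j, α j * y j : ℝ) : ℂ)))) :=
      IsCompact.of_isClosed_subset hDb.isCompact_closure (isClosed_tsupport _)
        (closure_minimal (hsupp.trans subset_closure) isClosed_closure)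
    have hInt : IntegrableOn (fun y : R3 =>
        Complex.exp (-(Complex.I * (k : ℂ)) * ((∑ j, β j * y j : ℝ) : ℂ))
          * (p y * ((ℰ i : ℂ) *
              Complex.exp (Complex.I * (k : ℂ) * ((∑ j, α j * y j : ℝ) : ℂ))))) D :=
      (hcont.integrable_of_hasCompactSupport hcs).integrableOn
    rw [integral_add hInt (integrableOn_const hDfin.ne)]
    have hpull : (∫ y in D, Complex.exp (-(Complex.I * (k : ℂ)) * ((∑ j, β j * y j : ℝ) : ℂ))
          * (p y * ((ℰ i : ℂ) *
              Complex.exp (Complex.I * (k : ℂ) * ((∑ j, α j * y j : ℝ) : ℂ)))))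
        = (ℰ i : ℂ) * Ip := by
      rw [hIp, ← integral_const_mul]
      exact integral_congr_ae (Filter.Eventually.of_forall fun y => by ring)
    rw [hpull, setIntegral_const, measureReal_def, Complex.real_smul, ha, hb2]
    push_cast
    ring
  -- the real cross product
  set c : Fin 3 → ℝ :=
    ![β 1 * ℰ 2 - β 2 * ℰ 1, β 2 * ℰ 0 - β 0 * ℰ 2, β 0 * ℰ 1 - β 1 * ℰ 0] with hc
  set s : ℝ := 1 - (∑ i, β i * ℰ i) ^ 2 with hs
  have hbr := sum_sq_of_norm_one β hβ
  have her := sum_sq_of_norm_one ℰ hℰ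
  have hlag : c 0 ^ 2 + c 1 ^ 2 + c 2 ^ 2 = s := by
    simp only [hc, hs, Fin.sum_univ_three, Matrix.cons_val_zero, Matrix.cons_val_one,
      Matrix.head_cons, Matrix.cons_val_two, Matrix.tail_cons]
    linear_combination (ℰ 0 ^ 2 + ℰ 1 ^ 2 + ℰ 2 ^ 2) * hbr + her
  have hdd : dotc (crossc (fun i => (β i : ℂ)) (fun i => (ℰ i : ℂ)))
      (crossc (fun i => (β i : ℂ)) (fun i => (ℰ i : ℂ)))
      = ((c 0 ^ 2 + c 1 ^ 2 + c 2 ^ 2 : ℝ) : ℂ) := by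
    simp only [dotc, crossc, hc, Fin.sum_univ_three, Matrix.cons_val_zero, Matrix.cons_val_one,
      Matrix.head_cons, Matrix.cons_val_two, Matrix.tail_cons]
    push_cast
    ring
  have hsval : ((s : ℝ) : ℂ) = dotc (crossc (fun i => (β i : ℂ)) (fun i => (ℰ i : ℂ)))
      (crossc (fun i => (β i : ℂ)) (fun i => (ℰ i : ℂ))) := by
    rw [hdd]
    exact congrArg Complex.ofReal hlag.symm
  -- s ≠ 0
  have hsne : s ≠ 0 := by
    obtain ⟨i, hi⟩ := Function.ne_iff.mp hβℰ
    have hcomp : ∀ j, crossc (fun i => (β i : ℂ)) (fun i => (ℰ i : ℂ)) j = ((c j : ℝ) : ℂ) := by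
      intro j
      fin_cases j <;> simp [crossc, hc] <;> push_cast <;> ring
    have hci : c i ≠ 0 := by
      intro h0
      apply hi
      rw [hcomp i, h0]
      simp
    have h2 : 0 < c i ^ 2 := lt_of_le_of_ne (sq_nonneg _) (Ne.symm (pow_ne_zero 2 hci))
    have hpos : 0 < ∑ j, c j ^ 2 :=
      Finset.sum_pos' (fun j _ => sq_nonneg _) ⟨i, Finset.mem_univ i, h2⟩
    rw [Fin.sum_univ_three, hlag] at hpos
    exact ne_of_gt hpos
  -- main computation
  have hdot : dotc (crossc (fun i => (β i : ℂ)) A)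
      (crossc (fun i => (β i : ℂ)) (fun i => (ℰ i : ℂ))) = a * ((s : ℝ) : ℂ) := by
    rw [hsval]
    simp only [dotc, crossc, Fin.sum_univ_three, Matrix.cons_val_zero, Matrix.cons_val_one,
      Matrix.head_cons, Matrix.cons_val_two, Matrix.tail_cons, hA']
    ring
  rw [hdot]
  have hscne : ((s : ℝ) : ℂ) ≠ 0 := by exact_mod_cast hsne
  have hπ : (Real.pi : ℂ) ≠ 0 := by
    exact_mod_cast Real.pi_ne_zero
  have hlhs : 4 * (Real.pi : ℂ) * (a * ((s : ℝ) : ℂ)) / ((s : ℝ) : ℂ) = Ip := by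
    rw [ha]
    field_simp
  rw [hlhs, hIp]
  have key : ∀ y : R3,
      Complex.exp (-(Complex.I * (k : ℂ)) * ((∑ j, β j * y j : ℝ) : ℂ))
          * (p y * Complex.exp (Complex.I * (k : ℂ) * ((∑ j, α j * y j : ℝ) : ℂ)))
      = Complex.exp (Complex.I * (k : ℂ) * ((∑ j, (α j - β j) * y j : ℝ) : ℂ)) * p y := by
    intro y
    have h1 : ((∑ j, (α j - β j) * y j : ℝ) : ℂ)
        = ((∑ j, α j * y j : ℝ) : ℂ) - ((∑ j, β j * y j : ℝ) : ℂ) := by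
      push_cast
      rw [← Finset.sum_sub_distrib]
      exact Finset.sum_congr rfl fun j _ => by ring
    rw [h1, show Complex.I * (k : ℂ) * (((∑ j, α j * y j : ℝ) : ℂ) - ((∑ j, β j * y j : ℝ) : ℂ))
        = Complex.I * (k : ℂ) * ((∑ j, α j * y j : ℝ) : ℂ)
          + (-(Complex.I * (k : ℂ))) * ((∑ j, β j * y j : ℝ) : ℂ) by ring,
      Complex.exp_add]
    ring
  exact integral_congr_ae (Filter.Eventually.of_forall fun y => key y)
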